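/- If probability measures μ_n on a countable set converge pointwise (weakly) to a probability measure μ, then H(μ_n) → H(μ) if and only if the sequence {μ_n} is entropy-tight. -/

import Mathlib

open Real Filter

/-- A probability measure on a countable set, given by its mass function. -/
def IsProb {X : Type*} (μ : X → ℝ) : Prop := (∀ x, 0 ≤ μ x) ∧ HasSum μ 1

/-- Shannon entropy, valued in `ℝ≥0∞` (for probability measures all terms are ≥ 0). -/
noncomputable def entE {X : Type*} (μ : X → ℝ) : ENNReal :=
  ∑' x, ENNReal.ofReal (negMulLog (μ x))

section Aux

variable {X : Type*}

/-- Splitting a tsum into a finite part and a tail. -/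
lemma aux_split (f : X → ENNReal) (K : Finset X) :
    ∑' x, f x = (∑ x ∈ K, f x) + ∑' x, ((↑K : Set X)ᶜ).indicator f x := by
  rw [sum_eq_tsum_indicator, ← ENNReal.tsum_add]
  exact tsum_congr fun x => (Set.indicator_self_add_compl_apply (↑K : Set X) f x).symm

/-- Tails are antitone in the finite set. -/
lemma aux_tail_mono (f : X → ENNReal) {K K' : Finset X} (h : K ⊆ K') :
    (∑' x, ((↑K' : Set X)ᶜ).indicator f x) ≤ ∑' x, ((↑K : Set X)ᶜ).indicator f x :=
  ENNReal.tsum_le_tsum fun x =>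
    Set.indicator_le_indicator_of_subset
      (Set.compl_subset_compl.mpr (by exact_mod_cast h)) (fun _ => zero_le) x

/-- A finite tsum has small tails. -/
lemma aux_tail_small (f : X → ENNReal) (hf : ∑' x, f x ≠ ⊤) {ε : ENNReal} (hε : 0 < ε) :
    ∃ K : Finset X, (∑' x, ((↑K : Set X)ᶜ).indicator f x) < ε := by
  have h := ENNReal.tendsto_tsum_compl_atTop_zero hf
  have h2 : ∀ᶠ s : Finset X in atTop, (∑' b : { x // x ∉ s }, f ↑b) < ε :=
    h.eventually (eventually_lt_nhds hε)
  obtain ⟨K, hK⟩ := h2.exists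
  refine ⟨K, ?_⟩
  have : (∑' b : { x // x ∉ K }, f ↑b) = ∑' x, ((↑K : Set X)ᶜ).indicator f x := by
    rw [← tsum_subtype ((↑K : Set X)ᶜ) f]
    rfl
  rwa [this] at hK

/-- Fatou-type bound for pointwise limits of `ℝ≥0∞`-valued sums. -/
lemma aux_fatou (f : ℕ → X → ENNReal) (g : X → ENNReal)
    (h : ∀ x, Tendsto (fun n => f n x) atTop (nhds (g x)))
    {c : ENNReal} (hc : ∀ n, (∑' x, f n x) ≤ c) : (∑' x, g x) ≤ c := by
  rw [ENNReal.tsum_eq_iSup_sum]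
  refine iSup_le fun F => ?_
  refine le_of_tendsto (tendsto_finset_sum F fun x _ => h x) ?_
  exact Eventually.of_forall fun n => (ENNReal.sum_le_tsum F).trans (hc n)

end Aux

/-- Vitali-type convergence: if probability measures `μₙ` on a countable set converge
pointwise to a probability measure `ν` (all of finite entropy), then
`H(μₙ) → H(ν)` if and only if the sequence is entropy-tight. -/
theorem entropy_tendsto_iff_entTight {X : Type*} [Countable X]
    (μ : ℕ → X → ℝ) (ν : X → ℝ)
    (hp : ∀ n, IsProb (μ n)) (hν : IsProb ν)
    (hw : ∀ x, Tendsto (fun n => μ n x) atTop (nhds (ν x)))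
    (hfin : ∀ n, entE (μ n) < ⊤) (hfin' : entE ν < ⊤) :
    Tendsto (fun n => entE (μ n)) atTop (nhds (entE ν)) ↔
      ∀ ε : ℝ, 0 < ε → ∃ K : Finset X, ∀ n,
        (∑' x, ((↑K : Set X)ᶜ).indicator
            (fun y => ENNReal.ofReal (negMulLog (μ n y))) x) < ENNReal.ofReal ε := by
  set g : ℕ → X → ENNReal := fun n x => ENNReal.ofReal (negMulLog (μ n x)) with hg
  set G : X → ENNReal := fun x => ENNReal.ofReal (negMulLog (ν x)) with hG
  have hpt : ∀ x, Tendsto (fun n => g n x) atTop (nhds (G x)) := fun x =>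
    (ENNReal.continuous_ofReal.tendsto _).comp
      ((Real.continuous_negMulLog.tendsto _).comp (hw x))
  have hptInd : ∀ (K : Finset X) (x : X),
      Tendsto (fun n => ((↑K : Set X)ᶜ).indicator (g n) x) atTop
        (nhds (((↑K : Set X)ᶜ).indicator G x)) := by
    intro K x
    by_cases hx : x ∈ ((↑K : Set X)ᶜ)
    · simpa [Set.indicator_of_mem hx] using hpt x
    · simpa [Set.indicator_of_notMem hx] using tendsto_const_nhds
  have hfs : ∀ K : Finset X,
      Tendsto (fun n => ∑ x ∈ K, g n x) atTop (nhds (∑ x ∈ K, G x)) := fun K =>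
    tendsto_finset_sum _ fun x _ => hpt x
  have hEn : ∀ n, entE (μ n) = ∑' x, g n x := fun n => rfl
  have hEν : entE ν = ∑' x, G x := rfl
  -- finite parts are below the total sums
  have hSle : ∀ K : Finset X, (∑ x ∈ K, G x) ≤ entE ν := fun K => ENNReal.sum_le_tsum K
  have hSnle : ∀ (n) (K : Finset X), (∑ x ∈ K, g n x) ≤ entE (μ n) := fun n K =>
    ENNReal.sum_le_tsum K
  -- "eventually the finite part is close from below" helper
  have hlow : ∀ K : Finset X, ∀ δ : ENNReal, δ ≠ 0 →
      ∀ᶠ n in atTop, (∑ x ∈ K, G x) ≤ (∑ x ∈ K, g n x) + δ := by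
    intro K δ hδ
    rcases eq_or_ne (∑ x ∈ K, G x) 0 with h0 | h0
    · exact Eventually.of_forall fun n => by simp [h0]
    · have hne : (∑ x ∈ K, G x) ≠ ⊤ := ((hSle K).trans_lt hfin').ne
      have : (∑ x ∈ K, G x) - δ < (∑ x ∈ K, G x) := ENNReal.sub_lt_self hne h0 hδ
      filter_upwards [(hfs K).eventually (eventually_ge_nhds this)] with n hn
      exact tsub_le_iff_right.mp hn
  constructor
  · -- convergence → tightness
    intro hT ε hε
    classical
    set δ : ENNReal := ENNReal.ofReal (ε / 4) with hδdef
    have hδpos : 0 < δ := ENNReal.ofReal_pos.mpr (by linarith)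
    -- small tail for ν
    obtain ⟨K₀, hK₀⟩ := aux_tail_small G hfin'.ne hδpos
    -- eventual bound on tails over K₀
    have hup : ∀ᶠ n in atTop, entE (μ n) ≤ entE ν + δ :=
      hT.eventually (eventually_le_nhds (ENNReal.lt_add_right hfin'.ne hδpos.ne'))
    have hNev : ∀ᶠ n in atTop,
        (∑' x, ((↑K₀ : Set X)ᶜ).indicator (g n) x) < ENNReal.ofReal ε := by
      filter_upwards [hup, hlow K₀ δ hδpos.ne'] with n h1 h2
      have hsplit := aux_split (g n) K₀
      have hsplitν := aux_split G K₀
      have hSn_ne : (∑ x ∈ K₀, g n x) ≠ ⊤ := ((hSnle n K₀).trans_lt (hfin n)).ne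
      have key : (∑ x ∈ K₀, g n x) + (∑' x, ((↑K₀ : Set X)ᶜ).indicator (g n) x)
          ≤ (∑ x ∈ K₀, g n x) + (δ + δ + δ) := by
        calc (∑ x ∈ K₀, g n x) + (∑' x, ((↑K₀ : Set X)ᶜ).indicator (g n) x)
            = entE (μ n) := by rw [hEn n, hsplit]
          _ ≤ entE ν + δ := h1
          _ = (∑ x ∈ K₀, G x) + (∑' x, ((↑K₀ : Set X)ᶜ).indicator G x) + δ := by
              rw [hEν, hsplitν]
          _ ≤ (∑ x ∈ K₀, G x) + δ + δ :=
              add_le_add_left (add_le_add_right hK₀.le _) δ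
          _ ≤ ((∑ x ∈ K₀, g n x) + δ) + δ + δ := by gcongr
          _ = (∑ x ∈ K₀, g n x) + (δ + δ + δ) := by ring
      have htail : (∑' x, ((↑K₀ : Set X)ᶜ).indicator (g n) x) ≤ δ + δ + δ :=
        (ENNReal.add_le_add_iff_left hSn_ne).mp key
      refine htail.trans_lt ?_
      have : δ + δ + δ = ENNReal.ofReal (ε / 4 + ε / 4 + ε / 4) := by
        rw [ENNReal.ofReal_add (by linarith) (by linarith),
          ENNReal.ofReal_add (by linarith) (by linarith)]
      rw [this]
      exact ENNReal.ofReal_lt_ofReal_iff hε |>.mpr (by linarith)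
    obtain ⟨N, hN⟩ := eventually_atTop.mp hNev
    -- small tails for the finitely many initial measures
    have hch : ∀ n, ∃ K : Finset X,
        (∑' x, ((↑K : Set X)ᶜ).indicator (g n) x) < ENNReal.ofReal ε := fun n =>
      aux_tail_small (g n) (hfin n).ne (ENNReal.ofReal_pos.mpr hε)
    choose Kn hKn using hch
    refine ⟨K₀ ∪ (Finset.range N).biUnion Kn, fun n => ?_⟩
    rcases le_or_gt N n with h | h
    · exact lt_of_le_of_lt (aux_tail_mono (g n) Finset.subset_union_left) (hN n h)
    · refine lt_of_le_of_lt (aux_tail_mono (g n) ?_) (hKn n)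
      exact (Finset.subset_biUnion_of_mem Kn (Finset.mem_range.mpr h)).trans
        Finset.subset_union_right
  · -- tightness → convergence
    intro ht
    rw [ENNReal.tendsto_nhds hfin'.ne]
    intro ε' hε'
    have hhalf : (0 : ENNReal) < ε' / 2 := ENNReal.div_pos hε'.ne' (by norm_num)
    obtain ⟨r, _, hr0, hrlt⟩ := ENNReal.lt_iff_exists_real_btwn.mp hhalf
    set δ : ENNReal := ENNReal.ofReal r with hδdef
    have hrpos : 0 < r := ENNReal.ofReal_pos.mp hr0
    obtain ⟨K, hK⟩ := ht r hrpos
    -- tail of ν over K is ≤ δ by Fatou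
    have hνtail : (∑' x, ((↑K : Set X)ᶜ).indicator G x) ≤ δ :=
      aux_fatou (fun n => ((↑K : Set X)ᶜ).indicator (g n)) (((↑K : Set X)ᶜ).indicator G)
        (hptInd K) (fun n => (hK n).le)
    have hS_ne : (∑ x ∈ K, G x) ≠ ⊤ := ((hSle K).trans_lt hfin').ne
    have hupS : ∀ᶠ n in atTop, (∑ x ∈ K, g n x) ≤ (∑ x ∈ K, G x) + δ :=
      (hfs K).eventually (eventually_le_nhds (ENNReal.lt_add_right hS_ne hr0.ne'))
    filter_upwards [hupS, hlow K δ hr0.ne'] with n h1 h2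
    have hsplit := aux_split (g n) K
    have hsplitν := aux_split G K
    have hδδ : δ + δ ≤ ε' := by
      calc δ + δ ≤ ε' / 2 + ε' / 2 := by gcongr <;> exact hrlt.le
        _ = ε' := ENNReal.add_halves ε'
    constructor
    · -- lower bound
      rw [tsub_le_iff_right]
      calc entE ν = (∑ x ∈ K, G x) + (∑' x, ((↑K : Set X)ᶜ).indicator G x) := by
            rw [hEν, hsplitν]
        _ ≤ ((∑ x ∈ K, g n x) + δ) + δ := by gcongr
        _ ≤ entE (μ n) + (δ + δ) := by
            rw [add_assoc]
            gcongr
            exact hSnle n K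
        _ ≤ entE (μ n) + ε' := by gcongr
    · -- upper bound
      calc entE (μ n) = (∑ x ∈ K, g n x) + (∑' x, ((↑K : Set X)ᶜ).indicator (g n) x) := by
            rw [hEn n, hsplit]
        _ ≤ ((∑ x ∈ K, G x) + δ) + δ := by gcongr; exact (hK n).le
        _ ≤ entE ν + (δ + δ) := by
            rw [add_assoc]
            gcongr
            exact hSle K
        _ ≤ entE ν + ε' := by gcongr
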